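/- For every positive integer n, the hypercube Q_n (n ≥ 3) has an interval total t-coloring if and only if n+1 ≤ t ≤ (n+1)(n+2)/2. -/

import Mathlib

namespace ITC

variable {V : Type*}

/-- A total coloring: proper on vertices, edges, and incident vertex-edge pairs. -/
def IsTotalColoring (G : SimpleGraph V) (cv : V → ℕ) (ce : Sym2 V → ℕ) : Prop :=
  (∀ u v, G.Adj u v → cv u ≠ cv v) ∧
  (∀ e f, e ∈ G.edgeSet → f ∈ G.edgeSet → e ≠ f → (∃ w, w ∈ e ∧ w ∈ f) → ce e ≠ ce f) ∧
  (∀ v e, e ∈ G.edgeSet → v ∈ e → cv v ≠ ce e)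

/-- The set of colors on a vertex `v` together with its incident edges. -/
def palette (G : SimpleGraph V) (cv : V → ℕ) (ce : Sym2 V → ℕ) (v : V) : Set ℕ :=
  insert (cv v) {c | ∃ e ∈ G.edgeSet, v ∈ e ∧ ce e = c}

/-- Degree of a vertex. -/
noncomputable def deg (G : SimpleGraph V) (v : V) : ℕ := (G.neighborSet v).ncard

/-- An interval total `t`-coloring. -/
def IsIntervalTotalColoring (G : SimpleGraph V) (t : ℕ) (cv : V → ℕ)
    (ce : Sym2 V → ℕ) : Prop :=
  IsTotalColoring G cv ce ∧
  (∀ v, cv v ∈ Set.Icc 1 t) ∧ (∀ e ∈ G.edgeSet, ce e ∈ Set.Icc 1 t) ∧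
  (∀ c ∈ Set.Icc 1 t, (∃ v, cv v = c) ∨ (∃ e ∈ G.edgeSet, ce e = c)) ∧
  (∀ v, ∃ a, palette G cv ce v = Set.Icc a (a + deg G v))

def HasIntervalTotalColoring (G : SimpleGraph V) (t : ℕ) : Prop :=
  ∃ cv ce, IsIntervalTotalColoring G t cv ce

/-- Minimum span of interval total colorings. -/
noncomputable def wtau (G : SimpleGraph V) : ℕ := sInf {t | HasIntervalTotalColoring G t}

/-- Maximum span of interval total colorings. -/
noncomputable def Wtau (G : SimpleGraph V) : ℕ := sSup {t | HasIntervalTotalColoring G t}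

/-- Total chromatic number: least `k` such that there is a total coloring
with colors in `{1, …, k}`. -/
noncomputable def totalChromaticNumber (G : SimpleGraph V) : ℕ :=
  sInf {k | ∃ cv ce, IsTotalColoring G cv ce ∧ (∀ v, cv v ∈ Set.Icc 1 k) ∧
    ∀ e ∈ G.edgeSet, ce e ∈ Set.Icc 1 k}

/-- A proper edge coloring. -/
def IsProperEdgeColoring (G : SimpleGraph V) (ce : Sym2 V → ℕ) : Prop :=
  ∀ e f, e ∈ G.edgeSet → f ∈ G.edgeSet → e ≠ f → (∃ w, w ∈ e ∧ w ∈ f) → ce e ≠ ce f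

/-- Colors appearing on the edges incident to `v`. -/
def edgePalette (G : SimpleGraph V) (ce : Sym2 V → ℕ) (v : V) : Set ℕ :=
  {c | ∃ e ∈ G.edgeSet, v ∈ e ∧ ce e = c}

/-- An interval (edge) `t`-coloring. -/
def IsIntervalEdgeColoring (G : SimpleGraph V) (t : ℕ) (ce : Sym2 V → ℕ) : Prop :=
  IsProperEdgeColoring G ce ∧
  (∀ e ∈ G.edgeSet, ce e ∈ Set.Icc 1 t) ∧
  (∀ c ∈ Set.Icc 1 t, ∃ e ∈ G.edgeSet, ce e = c) ∧
  (∀ v, ∃ a, edgePalette G ce v = Set.Icc (a + 1) (a + deg G v))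

/-- The hypercube `Q_n`. -/
def hypercube (n : ℕ) : SimpleGraph (Fin n → Bool) where
  Adj u v := ∃! i, u i ≠ v i
  symm := by
    constructor
    rintro u v ⟨i, hi, hu⟩
    exact ⟨i, Ne.symm hi, fun j hj => hu j (Ne.symm hj)⟩
  loopless := by
    constructor
    rintro u ⟨i, hi, -⟩
    exact hi rfl

/-- The complete graph on `Fin (2*r)` minus the perfect matching joining `i` and `i+r`. -/
def Kminus (r : ℕ) : SimpleGraph (Fin (2 * r)) where
  Adj i j := i ≠ j ∧ ¬((i : ℕ) + r = (j : ℕ) ∨ (j : ℕ) + r = (i : ℕ))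
  symm := by
    constructor
    rintro i j ⟨h1, h2⟩
    exact ⟨h1.symm, fun h => h2 h.symm⟩
  loopless := by
    constructor
    rintro i ⟨h1, -⟩
    exact h1 rfl

/-- Blow up each vertex of `H` into a copy of `β` (no edges inside copies). -/
def blowup {α : Type*} (H : SimpleGraph α) (β : Type*) : SimpleGraph (α × β) where
  Adj u v := H.Adj u.1 v.1
  symm := ⟨fun _ _ h => H.adj_symm h⟩
  loopless := ⟨fun u h => H.irrefl h⟩

/-! ### Generic helpers -/

lemma mem_edgePalette_iff {G : SimpleGraph V} {ce : Sym2 V → ℕ} {v : V} {c : ℕ} :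
    c ∈ edgePalette G ce v ↔ ∃ y, G.Adj v y ∧ ce s(v, y) = c := by
  constructor
  · rintro ⟨e, he, hv, hc⟩
    induction e with
    | _ a b =>
      rw [SimpleGraph.mem_edgeSet] at he
      rcases Sym2.mem_iff.1 hv with rfl | rfl
      · exact ⟨b, he, hc⟩
      · exact ⟨a, he.symm, by rwa [Sym2.eq_swap]⟩
  · rintro ⟨y, hy, hc⟩
    exact ⟨s(v, y), G.mem_edgeSet.2 hy, Sym2.mem_mk_left _ _, hc⟩

lemma mem_palette_iff {G : SimpleGraph V} {cv : V → ℕ} {ce : Sym2 V → ℕ} {v : V} {c : ℕ} :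
    c ∈ palette G cv ce v ↔ c = cv v ∨ ∃ y, G.Adj v y ∧ ce s(v, y) = c := by
  unfold palette
  rw [Set.mem_insert_iff]
  exact or_congr Iff.rfl mem_edgePalette_iff

lemma sym2_incident_eq {w p q : V} (h : s(w, p) = s(w, q)) : p = q := by
  rw [Sym2.eq_iff] at h
  rcases h with ⟨-, h2⟩ | ⟨h1, h2⟩
  · exact h2
  · exact h2.trans h1

lemma isProperEdgeColoring_iff {G : SimpleGraph V} {ce : Sym2 V → ℕ} :
    IsProperEdgeColoring G ce ↔
      ∀ w p q, G.Adj w p → G.Adj w q → p ≠ q → ce s(w, p) ≠ ce s(w, q) := by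
  constructor
  · intro h w p q hp hq hpq
    apply h _ _ (G.mem_edgeSet.2 hp) (G.mem_edgeSet.2 hq)
    · intro he
      exact hpq (sym2_incident_eq he)
    · exact ⟨w, Sym2.mem_mk_left _ _, Sym2.mem_mk_left _ _⟩
  · intro h e f he hf hef ⟨w, hwe, hwf⟩
    induction e with
    | _ a b =>
      induction f with
      | _ a' b' =>
        rw [SimpleGraph.mem_edgeSet] at he hf
        rcases Sym2.mem_iff.1 hwe with rfl | rfl
        · rcases Sym2.mem_iff.1 hwf with rfl | rfl
          · exact h w b b' he hf (fun hb => hef (by rw [hb])) 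
          · rw [Sym2.eq_swap (a := a')]
            exact h w b a' he hf.symm
              (fun hb => hef (by rw [hb, Sym2.eq_swap]))
        · rcases Sym2.mem_iff.1 hwf with rfl | rfl
          · rw [Sym2.eq_swap (a := a)]
            exact h w a b' he.symm hf
              (fun hb => hef (by rw [← hb, Sym2.eq_swap]))
          · rw [Sym2.eq_swap (a := a), Sym2.eq_swap (a := a')]
            exact h w a a' he.symm hf.symm
              (fun hb => hef (by rw [hb]))
  
lemma isTotalColoring_of_pointwise {G : SimpleGraph V} {cv : V → ℕ} {ce : Sym2 V → ℕ}
    (h1 : ∀ u v, G.Adj u v → cv u ≠ cv v)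
    (h2 : ∀ w p q, G.Adj w p → G.Adj w q → p ≠ q → ce s(w, p) ≠ ce s(w, q))
    (h3 : ∀ v y, G.Adj v y → cv v ≠ ce s(v, y)) :
    IsTotalColoring G cv ce := by
  refine ⟨h1, isProperEdgeColoring_iff.2 h2, ?_⟩
  intro v e he hv
  induction e with
  | _ a b =>
    rw [SimpleGraph.mem_edgeSet] at he
    rcases Sym2.mem_iff.1 hv with rfl | rfl
    · exact h3 v b he
    · rw [Sym2.eq_swap]
      exact h3 v a he.symm

lemma edge_usage_of_pointwise {G : SimpleGraph V} {ce : Sym2 V → ℕ} {c : ℕ}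
    (h : ∃ v y, G.Adj v y ∧ ce s(v, y) = c) : ∃ e ∈ G.edgeSet, ce e = c := by
  obtain ⟨v, y, hadj, hc⟩ := h
  exact ⟨s(v, y), G.mem_edgeSet.2 hadj, hc⟩

lemma edge_color_bound {G : SimpleGraph V} {ce : Sym2 V → ℕ}
    (h : ∀ v y, G.Adj v y → ce s(v, y) ∈ Set.Icc 1 t) :
    ∀ e ∈ G.edgeSet, ce e ∈ Set.Icc 1 t := by
  intro e he
  induction e with
  | _ a b => exact h a b (G.mem_edgeSet.1 he)

/-! ### Hypercube basics -/

def flp (x : Fin n → Bool) (i : Fin n) : Fin n → Bool :=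
  fun j => if j = i then !x j else x j

lemma flp_apply_self (x : Fin n → Bool) (i : Fin n) : flp x i i = !x i := by
  simp [flp]

lemma flp_apply_ne (x : Fin n → Bool) {i j : Fin n} (h : j ≠ i) : flp x i j = x j := by
  simp [flp, h]

lemma flp_flp (x : Fin n → Bool) (i : Fin n) : flp (flp x i) i = x := by
  funext j
  by_cases h : j = i
  · subst h; simp [flp]
  · simp [flp, h]

lemma flp_ne (x : Fin n → Bool) (i : Fin n) : flp x i ≠ x := by
  intro h
  have := congrFun h i
  rw [flp_apply_self] at this
  cases x i <;> simp_all

lemma hypercube_adj_iff {n : ℕ} {x y : Fin n → Bool} :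
    (hypercube n).Adj x y ↔ ∃ i, y = flp x i := by
  constructor
  · rintro ⟨i, hi, hu⟩
    refine ⟨i, funext fun j => ?_⟩
    by_cases h : j = i
    · subst h
      rw [flp_apply_self]
      cases hx : x j <;> cases hy : y j <;> simp_all
    · rw [flp_apply_ne _ h]
      by_contra hne
      exact h (hu j (Ne.symm hne))
  · rintro ⟨i, rfl⟩
    refine ⟨i, ?_, fun j hj => ?_⟩
    · show x i ≠ flp x i i
      rw [flp_apply_self]; cases x i <;> simp
    · by_contra h
      have hj' : x j ≠ flp x i j := hj
      exact hj' (by rw [flp_apply_ne _ h])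

lemma hypercube_adj_flp (x : Fin n → Bool) (i : Fin n) : (hypercube n).Adj x (flp x i) :=
  hypercube_adj_iff.2 ⟨i, rfl⟩

lemma flp_injective (x : Fin n → Bool) : Function.Injective (flp x) := by
  intro i j h
  by_contra hij
  have := congrFun h i
  rw [flp_apply_self, flp_apply_ne _ hij] at this
  cases x i <;> simp_all

lemma hypercube_neighborSet (x : Fin n → Bool) :
    (hypercube n).neighborSet x = Set.range (flp x) := by
  ext y
  simp only [SimpleGraph.mem_neighborSet, Set.mem_range]
  rw [hypercube_adj_iff]
  exact ⟨fun ⟨i, h⟩ => ⟨i, h.symm⟩, fun ⟨i, h⟩ => ⟨i, h.symm⟩⟩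

lemma deg_hypercube (x : Fin n → Bool) : deg (hypercube n) x = n := by
  rw [deg, hypercube_neighborSet, ← Set.image_univ,
    Set.ncard_image_of_injective _ (flp_injective x), Set.ncard_univ]
  simp

/-! ### Step graph -/

def stepG (G : SimpleGraph V) : SimpleGraph (V × Bool) where
  Adj a b := (a.2 = b.2 ∧ G.Adj a.1 b.1) ∨ (a.1 = b.1 ∧ a.2 ≠ b.2)
  symm := by
    constructor
    rintro a b (⟨h1, h2⟩ | ⟨h1, h2⟩)
    · exact Or.inl ⟨h1.symm, h2.symm⟩
    · exact Or.inr ⟨h1.symm, h2.symm⟩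
  loopless := by
    constructor
    rintro a (⟨-, h⟩ | ⟨-, h⟩)
    · exact G.irrefl h
    · exact h rfl

lemma stepG_adj {G : SimpleGraph V} {x y : V} {i j : Bool} :
    (stepG G).Adj (x, i) (y, j) ↔ (i = j ∧ G.Adj x y) ∨ (x = y ∧ i ≠ j) := Iff.rfl

lemma stepG_neighborSet (G : SimpleGraph V) (x : V) (i : Bool) :
    (stepG G).neighborSet (x, i) = insert (x, !i) ((fun y => (y, i)) '' G.neighborSet x) := by
  ext ⟨y, j⟩
  simp only [SimpleGraph.mem_neighborSet, stepG_adj, Set.mem_insert_iff, Set.mem_image,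
    Prod.mk.injEq]
  constructor
  · rintro (⟨rfl, h⟩ | ⟨rfl, h⟩)
    · exact Or.inr ⟨y, h, rfl, rfl⟩
    · refine Or.inl ⟨rfl, ?_⟩
      cases i <;> cases j <;> simp_all
  · rintro (⟨rfl, rfl⟩ | ⟨z, hz, rfl, rfl⟩)
    · refine Or.inr ⟨rfl, ?_⟩
      cases i <;> simp
    · exact Or.inl ⟨rfl, hz⟩

lemma deg_stepG [Finite V] (G : SimpleGraph V) (x : V) (i : Bool) :
    deg (stepG G) (x, i) = deg G x + 1 := by
  have h1 : (x, !i) ∉ (fun y => (y, i)) '' G.neighborSet x := by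
    rintro ⟨y, hy, heq⟩
    have h2 := congrArg Prod.snd heq
    exact absurd h2 (by cases i <;> simp)
  have hinj : Function.Injective (fun y : V => (y, i)) := fun a b hab => congrArg Prod.fst hab
  rw [deg, stepG_neighborSet, Set.ncard_insert_of_notMem h1 (Set.toFinite _),
    Set.ncard_image_of_injective _ hinj]
  rfl

/-! ### Isomorphism: stepG (hypercube n) ≃g hypercube (n+1) -/

lemma flp_cons_zero (b : Bool) (x : Fin n → Bool) :
    flp (Fin.cons b x) 0 = Fin.cons (!b) x := by
  funext j
  refine Fin.cases ?_ (fun j => ?_) j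
  · rw [flp_apply_self]; simp
  · rw [flp_apply_ne]
    · simp
    · exact (Fin.succ_ne_zero j)

lemma flp_cons_succ (b : Bool) (x : Fin n → Bool) (i : Fin n) :
    flp (Fin.cons b x) i.succ = Fin.cons b (flp x i) := by
  funext j
  refine Fin.cases ?_ (fun j => ?_) j
  · rw [flp_apply_ne]
    · simp
    · exact (Fin.succ_ne_zero i).symm
  · by_cases h : j = i
    · subst h
      rw [flp_apply_self]
      simp [flp_apply_self]
    · rw [flp_apply_ne]
      · simp [flp_apply_ne _ h]
      · simpa using h

lemma cons_eq_cons {b c : Bool} {x y : Fin n → Bool} :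
    (Fin.cons b x : Fin (n+1) → Bool) = Fin.cons c y ↔ b = c ∧ x = y := by
  constructor
  · intro h
    refine ⟨?_, funext fun j => ?_⟩
    · have := congrFun h 0; simpa using this
    · have := congrFun h j.succ; simpa using this
  · rintro ⟨rfl, rfl⟩; rfl

def stepEquiv (n : ℕ) : (Fin n → Bool) × Bool ≃ (Fin (n + 1) → Bool) where
  toFun p := Fin.cons p.2 p.1
  invFun x := (fun i => x i.succ, x 0)
  left_inv p := by
    cases p with
    | _ x b => simp
  right_inv x := by
    funext j
    refine Fin.cases ?_ (fun j => ?_) j <;> simp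

def stepIso (n : ℕ) : stepG (hypercube n) ≃g hypercube (n + 1) where
  toEquiv := stepEquiv n
  map_rel_iff' := by
    rintro ⟨x, b⟩ ⟨y, c⟩
    show (hypercube (n+1)).Adj (Fin.cons b x) (Fin.cons c y) ↔ _
    rw [hypercube_adj_iff, stepG_adj]
    constructor
    · rintro ⟨i, hi⟩
      rcases Fin.eq_zero_or_eq_succ i with rfl | ⟨j, rfl⟩
      · rw [flp_cons_zero, cons_eq_cons] at hi
        refine Or.inr ⟨hi.2.symm, ?_⟩
        rw [hi.1]; cases b <;> simp
      · rw [flp_cons_succ, cons_eq_cons] at hi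
        exact Or.inl ⟨hi.1.symm, hypercube_adj_iff.2 ⟨j, hi.2⟩⟩
    · rintro (⟨rfl, h⟩ | ⟨rfl, h⟩)
      · obtain ⟨j, rfl⟩ := hypercube_adj_iff.1 h
        exact ⟨j.succ, (flp_cons_succ _ _ _).symm⟩
      · refine ⟨0, ?_⟩
        rw [flp_cons_zero, cons_eq_cons]
        refine ⟨?_, rfl⟩
        cases b <;> cases c <;> simp_all

/-! ### Transfer along isomorphisms -/

lemma deg_iso {W : Type*} {G : SimpleGraph V} {H : SimpleGraph W} (φ : G ≃g H) (v : V) :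
    deg H (φ v) = deg G v := by
  rw [deg, deg, ← Nat.card_coe_set_eq, ← Nat.card_coe_set_eq]
  exact (Nat.card_congr (φ.mapNeighborSet v)).symm

lemma transfer_total {W : Type*} {G : SimpleGraph V} {H : SimpleGraph W} (φ : G ≃g H)
    {t : ℕ} (h : HasIntervalTotalColoring G t) : HasIntervalTotalColoring H t := by
  obtain ⟨cv, ce, ⟨h1, h2, h3⟩, hb1, hb2, hu, hp⟩ := h
  refine ⟨fun v => cv (φ.symm v), fun e => ce (Sym2.map φ.symm e), ?_, ?_, ?_, ?_, ?_⟩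
  · refine isTotalColoring_of_pointwise ?_ ?_ ?_
    · intro u v huv
      exact h1 _ _ (φ.symm.map_adj_iff.2 huv)
    · intro w p q hp hq hpq
      simp only [Sym2.map_pair_eq]
      exact isProperEdgeColoring_iff.1 h2 _ _ _ (φ.symm.map_adj_iff.2 hp)
        (φ.symm.map_adj_iff.2 hq) (fun hh => hpq (φ.symm.injective hh))
    · intro v y hvy
      simp only [Sym2.map_pair_eq]
      exact h3 (φ.symm v) s(φ.symm v, φ.symm y)
        (G.mem_edgeSet.2 (φ.symm.map_adj_iff.2 hvy)) (Sym2.mem_mk_left _ _)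
  · intro v; exact hb1 _
  · refine edge_color_bound ?_
    intro v y hvy
    simp only [Sym2.map_pair_eq]
    exact hb2 _ (G.mem_edgeSet.2 (φ.symm.map_adj_iff.2 hvy))
  · intro c hc
    rcases hu c hc with ⟨v, hv⟩ | ⟨e, he, hce⟩
    · exact Or.inl ⟨φ v, by simpa using hv⟩
    · induction e with
      | _ a b =>
        refine Or.inr (edge_usage_of_pointwise ⟨φ a, φ b, ?_, ?_⟩)
        · exact φ.map_adj_iff.2 (G.mem_edgeSet.1 he)
        · simpa [Sym2.map_pair_eq] using hce
  · intro v
    obtain ⟨a, ha⟩ := hp (φ.symm v)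
    refine ⟨a, ?_⟩
    have hdeg : deg H v = deg G (φ.symm v) := (deg_iso φ.symm v).symm
    rw [hdeg, ← ha]
    ext c
    rw [mem_palette_iff, mem_palette_iff]
    constructor
    · rintro (hcv | ⟨y, hy, hc⟩)
      · exact Or.inl hcv
      · exact Or.inr ⟨φ.symm y, φ.symm.map_adj_iff.2 hy, by simpa [Sym2.map_pair_eq] using hc⟩
    · rintro (hcv | ⟨y, hy, hc⟩)
      · exact Or.inl hcv
      · refine Or.inr ⟨φ y, ?_, ?_⟩
        · have h' : H.Adj (φ (φ.symm v)) (φ y) := φ.map_adj_iff.2 hy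
          simpa using h'
        · simp only [Sym2.map_pair_eq, RelIso.symm_apply_apply]
          exact hc

lemma transfer_edge {W : Type*} {G : SimpleGraph V} {H : SimpleGraph W} (φ : G ≃g H)
    {t : ℕ} {ce : Sym2 V → ℕ} (h : IsIntervalEdgeColoring G t ce) :
    ∃ ce', IsIntervalEdgeColoring H t ce' := by
  obtain ⟨h2, hb2, hu, hp⟩ := h
  refine ⟨fun e => ce (Sym2.map φ.symm e), ?_, ?_, ?_, ?_⟩
  · refine isProperEdgeColoring_iff.2 ?_
    intro w p q hp hq hpq
    simp only [Sym2.map_pair_eq]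
    exact isProperEdgeColoring_iff.1 h2 _ _ _ (φ.symm.map_adj_iff.2 hp)
      (φ.symm.map_adj_iff.2 hq) (fun hh => hpq (φ.symm.injective hh))
  · refine edge_color_bound ?_
    intro v y hvy
    simp only [Sym2.map_pair_eq]
    exact hb2 _ (G.mem_edgeSet.2 (φ.symm.map_adj_iff.2 hvy))
  · intro c hc
    obtain ⟨e, he, hce⟩ := hu c hc
    induction e with
    | _ a b =>
      refine edge_usage_of_pointwise ⟨φ a, φ b, ?_, ?_⟩
      · exact φ.map_adj_iff.2 (G.mem_edgeSet.1 he)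
      · simpa [Sym2.map_pair_eq] using hce
  · intro v
    obtain ⟨a, ha⟩ := hp (φ.symm v)
    refine ⟨a, ?_⟩
    have hdeg : deg H v = deg G (φ.symm v) := (deg_iso φ.symm v).symm
    rw [hdeg, ← ha]
    ext c
    rw [mem_edgePalette_iff, mem_edgePalette_iff]
    constructor
    · rintro ⟨y, hy, hc⟩
      exact ⟨φ.symm y, φ.symm.map_adj_iff.2 hy, by simpa [Sym2.map_pair_eq] using hc⟩
    · rintro ⟨y, hy, hc⟩
      refine ⟨φ y, ?_, ?_⟩
      · have h' : H.Adj (φ (φ.symm v)) (φ y) := φ.map_adj_iff.2 hy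
        simpa using h'
      · simp only [Sym2.map_pair_eq, RelIso.symm_apply_apply]
        exact hc

/-! ### Edge coloring constructions -/

def ecol [DecidableEq V] (b : V → ℕ) (k s : ℕ) (ce : Sym2 V → ℕ) : Sym2 (V × Bool) → ℕ :=
  Sym2.lift ⟨fun p q =>
    if p.2 = q.2 then ce s(p.1, q.1) + (if p.2 then s else 0)
    else if p.1 = q.1 then k + b p.1 else 0, by
      intro p q
      dsimp only
      by_cases h1 : p.2 = q.2
      · rw [if_pos h1, if_pos h1.symm, Sym2.eq_swap, h1]
      · rw [if_neg h1, if_neg (Ne.symm h1)]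
        by_cases h2 : p.1 = q.1
        · rw [if_pos h2, if_pos h2.symm, h2]
        · rw [if_neg h2, if_neg (Ne.symm h2)]⟩

@[simp] lemma ecol_copy [DecidableEq V] (b : V → ℕ) (k s : ℕ) (ce : Sym2 V → ℕ)
    (x y : V) (i : Bool) :
    ecol b k s ce s((x, i), (y, i)) = ce s(x, y) + (if i then s else 0) := by
  rw [ecol, Sym2.lift_mk]
  simp

@[simp] lemma ecol_cross [DecidableEq V] (b : V → ℕ) (k s : ℕ) (ce : Sym2 V → ℕ)
    (x : V) (i : Bool) :
    ecol b k s ce s((x, i), (x, !i)) = k + b x := by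
  rw [ecol, Sym2.lift_mk]
  have h : i ≠ !i := by cases i <;> simp
  simp [h]

lemma bool_ne_iff {i j : Bool} : i ≠ j ↔ j = !i := by cases i <;> cases j <;> simp

lemma stepG_adj_cases {G : SimpleGraph V} {x : V} {i : Bool} {p : V × Bool}
    (h : (stepG G).Adj (x, i) p) : (∃ y, G.Adj x y ∧ p = (y, i)) ∨ p = (x, !i) := by
  obtain ⟨p1, p2⟩ := p
  rw [stepG_adj] at h
  rcases h with ⟨h1, h2⟩ | ⟨h1, h2⟩
  · exact Or.inl ⟨p1, h2, by rw [← h1]⟩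
  · right
    rw [← h1, bool_ne_iff.1 h2]

lemma stepG_adj_copy {G : SimpleGraph V} {x y : V} (i : Bool) (h : G.Adj x y) :
    (stepG G).Adj (x, i) (y, i) := Or.inl ⟨rfl, h⟩

lemma stepG_adj_cross {G : SimpleGraph V} (x : V) (i : Bool) :
    (stepG G).Adj (x, i) (x, !i) := Or.inr ⟨rfl, by cases i <;> simp⟩

lemma edge_facts [Nonempty V] {G : SimpleGraph V} {r t : ℕ} {ce : Sym2 V → ℕ}
    (hreg : ∀ v, deg G v = r) (hr : 1 ≤ r) (h : IsIntervalEdgeColoring G t ce) :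
    ∃ b : V → ℕ,
      (∀ v y, G.Adj v y → b v + 1 ≤ ce s(v, y) ∧ ce s(v, y) ≤ b v + r) ∧
      (∀ v, edgePalette G ce v = Set.Icc (b v + 1) (b v + r)) ∧
      (∀ v, b v + r ≤ t) ∧ (∃ u, b u = 0) ∧ (∃ u, b u + r = t) ∧ 1 ≤ t := by
  obtain ⟨hprop, hbnd, husage, hpal⟩ := h
  choose b hb using hpal
  have hb' : ∀ v, edgePalette G ce v = Set.Icc (b v + 1) (b v + r) := by
    intro v
    have := hb v
    rwa [hreg v] at this
  have hedge : ∀ v y, G.Adj v y → b v + 1 ≤ ce s(v, y) ∧ ce s(v, y) ≤ b v + r := by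
    intro v y hy
    have : ce s(v, y) ∈ edgePalette G ce v := mem_edgePalette_iff.2 ⟨y, hy, rfl⟩
    rw [hb'] at this
    exact this
  have htop : ∀ v, b v + r ≤ t := by
    intro v
    have hm : b v + r ∈ edgePalette G ce v := by
      rw [hb']
      exact ⟨by omega, le_rfl⟩
    obtain ⟨y, hy, hc⟩ := mem_edgePalette_iff.1 hm
    have := hbnd s(v, y) (G.mem_edgeSet.2 hy)
    rw [Set.mem_Icc] at this
    omega
  have ht1 : 1 ≤ t := by
    have := htop (Classical.arbitrary V)
    omega
  have hget : ∀ c, 1 ≤ c → c ≤ t → ∃ u y, G.Adj u y ∧ ce s(u, y) = c := by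
    intro c h1 h2
    obtain ⟨e, he, hce⟩ := husage c ⟨h1, h2⟩
    induction e with
    | _ a b' => exact ⟨a, b', G.mem_edgeSet.1 he, hce⟩
  refine ⟨b, hedge, hb', htop, ?_, ?_, ht1⟩
  · obtain ⟨u, y, hy, hc⟩ := hget 1 le_rfl ht1
    have := hedge u y hy
    exact ⟨u, by omega⟩
  · obtain ⟨u, y, hy, hc⟩ := hget t ht1 le_rfl
    have h1 := hedge u y hy
    have h2 := htop u
    exact ⟨u, by omega⟩

lemma constructE1 [Finite V] [Nonempty V] [DecidableEq V] {G : SimpleGraph V} {r t : ℕ}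
    {ce : Sym2 V → ℕ}
    (hreg : ∀ v, deg G v = r) (hr : 1 ≤ r) (h : IsIntervalEdgeColoring G t ce) :
    ∃ ce', IsIntervalEdgeColoring (stepG G) (t + 1) ce' := by
  obtain ⟨b, hedge, hpal', htop, _, ⟨u0, hu0⟩, ht1⟩ := edge_facts hreg hr h
  have hprop := isProperEdgeColoring_iff.1 h.1
  have hbnd : ∀ v y, G.Adj v y → 1 ≤ ce s(v, y) ∧ ce s(v, y) ≤ t := by
    intro v y hy
    have := h.2.1 s(v, y) (G.mem_edgeSet.2 hy)
    rwa [Set.mem_Icc] at this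
  have husage := h.2.2.1
  refine ⟨ecol b (r + 1) 0 ce, isProperEdgeColoring_iff.2 ?_, edge_color_bound ?_, ?_, ?_⟩
  · rintro ⟨w, i⟩ p q hp hq hne
    rcases stepG_adj_cases hp with ⟨y1, hy1, rfl⟩ | rfl <;>
      rcases stepG_adj_cases hq with ⟨y2, hy2, rfl⟩ | rfl
    · simp only [ecol_copy]
      have hy12 : y1 ≠ y2 := fun hy => hne (by rw [hy])
      have := hprop w y1 y2 hy1 hy2 hy12
      omega
    · simp only [ecol_copy, ecol_cross]
      have := hedge w y1 hy1
      have := htop w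
      cases i <;> simp <;> omega
    · simp only [ecol_copy, ecol_cross]
      have := hedge w y2 hy2
      cases i <;> simp <;> omega
    · exact absurd rfl hne
  · rintro ⟨x, i⟩ p hadj
    rcases stepG_adj_cases hadj with ⟨z, hz, rfl⟩ | rfl
    · rw [ecol_copy]
      have := hbnd x z hz
      rw [Set.mem_Icc]
      cases i <;> simp <;> omega
    · rw [ecol_cross, Set.mem_Icc]
      have := htop x
      omega
  · intro c hc
    rw [Set.mem_Icc] at hc
    by_cases hct : c ≤ t
    · obtain ⟨e, he, hce⟩ := husage c ⟨hc.1, hct⟩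
      induction e with
      | _ a b' =>
        refine edge_usage_of_pointwise
          ⟨(a, false), (b', false), stepG_adj_copy _ (G.mem_edgeSet.1 he), ?_⟩
        rw [ecol_copy]
        simpa using hce
    · refine edge_usage_of_pointwise ⟨(u0, false), (u0, true), ?_, ?_⟩
      · have := stepG_adj_cross (G := G) u0 false
        simpa using this
      · have hh : (true : Bool) = !false := rfl
        rw [hh, ecol_cross]
        omega
  · rintro ⟨x, i⟩
    refine ⟨b x, ?_⟩
    rw [deg_stepG, hreg]
    ext c
    rw [mem_edgePalette_iff, Set.mem_Icc]
    constructor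
    · rintro ⟨p, hadj, hc⟩
      rcases stepG_adj_cases hadj with ⟨z, hz, rfl⟩ | rfl
      · rw [ecol_copy] at hc
        have := hedge x z hz
        cases i <;> simp at hc <;> omega
      · rw [ecol_cross] at hc
        omega
    · intro hcc
      by_cases hcr : c ≤ b x + r
      · have hmem : c ∈ edgePalette G ce x := by
          rw [hpal' x]
          exact ⟨hcc.1, hcr⟩
        obtain ⟨y, hy, hcy⟩ := mem_edgePalette_iff.1 hmem
        refine ⟨(y, i), stepG_adj_copy i hy, ?_⟩
        rw [ecol_copy]
        cases i <;> simp [hcy]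
      · refine ⟨(x, !i), stepG_adj_cross x i, ?_⟩
        rw [ecol_cross]
        omega

lemma constructE2 [Finite V] [Nonempty V] [DecidableEq V] {G : SimpleGraph V} {r t : ℕ}
    {ce : Sym2 V → ℕ}
    (hreg : ∀ v, deg G v = r) (hr : 1 ≤ r) (h : IsIntervalEdgeColoring G t ce) :
    ∃ ce', IsIntervalEdgeColoring (stepG G) (t + r + 1) ce' := by
  obtain ⟨b, hedge, hpal', htop, ⟨z0, hz0⟩, _, ht1⟩ := edge_facts hreg hr h
  have hrt : r ≤ t := by
    have := htop (Classical.arbitrary V)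
    omega
  have hprop := isProperEdgeColoring_iff.1 h.1
  have hbnd : ∀ v y, G.Adj v y → 1 ≤ ce s(v, y) ∧ ce s(v, y) ≤ t := by
    intro v y hy
    have := h.2.1 s(v, y) (G.mem_edgeSet.2 hy)
    rwa [Set.mem_Icc] at this
  have husage := h.2.2.1
  refine ⟨ecol b (r + 1) (r + 1) ce, isProperEdgeColoring_iff.2 ?_, edge_color_bound ?_, ?_, ?_⟩
  · rintro ⟨w, i⟩ p q hp hq hne
    rcases stepG_adj_cases hp with ⟨y1, hy1, rfl⟩ | rfl <;>
      rcases stepG_adj_cases hq with ⟨y2, hy2, rfl⟩ | rfl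
    · simp only [ecol_copy]
      have hy12 : y1 ≠ y2 := fun hy => hne (by rw [hy])
      have := hprop w y1 y2 hy1 hy2 hy12
      omega
    · simp only [ecol_copy, ecol_cross]
      have := hedge w y1 hy1
      cases i <;> simp <;> omega
    · simp only [ecol_copy, ecol_cross]
      have := hedge w y2 hy2
      cases i <;> simp <;> omega
    · exact absurd rfl hne
  · rintro ⟨x, i⟩ p hadj
    rcases stepG_adj_cases hadj with ⟨z, hz, rfl⟩ | rfl
    · rw [ecol_copy]
      have := hbnd x z hz
      rw [Set.mem_Icc]
      cases i <;> simp <;> omega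
    · rw [ecol_cross, Set.mem_Icc]
      have := htop x
      omega
  · intro c hc
    rw [Set.mem_Icc] at hc
    by_cases hct : c ≤ t
    · obtain ⟨e, he, hce⟩ := husage c ⟨hc.1, hct⟩
      induction e with
      | _ a b' =>
        refine edge_usage_of_pointwise
          ⟨(a, false), (b', false), stepG_adj_copy _ (G.mem_edgeSet.1 he), ?_⟩
        rw [ecol_copy]
        simpa using hce
    · by_cases hc2 : r + 2 ≤ c
      · obtain ⟨e, he, hce⟩ := husage (c - (r + 1)) ⟨by omega, by omega⟩
        induction e with
        | _ a b' =>
          refine edge_usage_of_pointwise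
            ⟨(a, true), (b', true), stepG_adj_copy _ (G.mem_edgeSet.1 he), ?_⟩
          rw [ecol_copy]
          simp only [if_pos]
          omega
      · refine edge_usage_of_pointwise ⟨(z0, false), (z0, true), ?_, ?_⟩
        · have := stepG_adj_cross (G := G) z0 false
          simpa using this
        · have hh : (true : Bool) = !false := rfl
          rw [hh, ecol_cross]
          omega
  · rintro ⟨x, i⟩
    cases i
    case _ =>
      refine ⟨b x, ?_⟩
      rw [deg_stepG, hreg]
      ext c
      rw [mem_edgePalette_iff, Set.mem_Icc]
      constructor
      · rintro ⟨p, hadj, hc⟩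
        rcases stepG_adj_cases hadj with ⟨z, hz, rfl⟩ | rfl
        · rw [ecol_copy] at hc
          have := hedge x z hz
          simp at hc
          omega
        · rw [ecol_cross] at hc
          omega
      · intro hcc
        by_cases hcr : c ≤ b x + r
        · have hmem : c ∈ edgePalette G ce x := by
            rw [hpal' x]
            exact ⟨hcc.1, hcr⟩
          obtain ⟨y, hy, hcy⟩ := mem_edgePalette_iff.1 hmem
          refine ⟨(y, false), stepG_adj_copy false hy, ?_⟩
          rw [ecol_copy]
          simp [hcy]
        · refine ⟨(x, !false), stepG_adj_cross x false, ?_⟩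
          rw [ecol_cross]
          omega
    case _ =>
      refine ⟨b x + r, ?_⟩
      rw [deg_stepG, hreg]
      ext c
      rw [mem_edgePalette_iff, Set.mem_Icc]
      constructor
      · rintro ⟨p, hadj, hc⟩
        rcases stepG_adj_cases hadj with ⟨z, hz, rfl⟩ | rfl
        · rw [ecol_copy] at hc
          have := hedge x z hz
          simp at hc
          omega
        · rw [ecol_cross] at hc
          omega
      · intro hcc
        by_cases hcr : b x + r + 2 ≤ c
        · have hmem : c - (r + 1) ∈ edgePalette G ce x := by
            rw [hpal' x]
            constructor <;> omega
          obtain ⟨y, hy, hcy⟩ := mem_edgePalette_iff.1 hmem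
          refine ⟨(y, true), stepG_adj_copy true hy, ?_⟩
          rw [ecol_copy]
          simp only [if_pos]
          omega
        · refine ⟨(x, !true), stepG_adj_cross x true, ?_⟩
          rw [ecol_cross]
          omega

/-! ### Total coloring constructions -/

lemma total_facts [Nonempty V] {G : SimpleGraph V} {r t : ℕ} {cv : V → ℕ} {ce : Sym2 V → ℕ}
    (hreg : ∀ v, deg G v = r) (h : IsIntervalTotalColoring G t cv ce) :
    ∃ a : V → ℕ,
      (∀ v, palette G cv ce v = Set.Icc (a v) (a v + r)) ∧
      (∀ v, a v ≤ cv v ∧ cv v ≤ a v + r) ∧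
      (∀ v y, G.Adj v y → a v ≤ ce s(v, y) ∧ ce s(v, y) ≤ a v + r) ∧
      (∀ v, 1 ≤ a v) ∧ (∀ v, a v + r ≤ t) ∧ (∃ u, a u = 1) ∧ r + 1 ≤ t := by
  obtain ⟨⟨h1, h2, h3⟩, hb1, hb2, husage, hpal⟩ := h
  choose a ha using hpal
  have ha' : ∀ v, palette G cv ce v = Set.Icc (a v) (a v + r) := by
    intro v
    have := ha v
    rwa [hreg v] at this
  have hmem : ∀ v c, c ∈ palette G cv ce v → 1 ≤ c ∧ c ≤ t := by
    intro v c hc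
    rcases mem_palette_iff.1 hc with rfl | ⟨y, hy, hce⟩
    · have := hb1 v
      rwa [Set.mem_Icc] at this
    · have := hb2 s(v, y) (G.mem_edgeSet.2 hy)
      rw [Set.mem_Icc] at this
      omega
  have hcv : ∀ v, a v ≤ cv v ∧ cv v ≤ a v + r := by
    intro v
    have : cv v ∈ palette G cv ce v := mem_palette_iff.2 (Or.inl rfl)
    rw [ha', Set.mem_Icc] at this
    exact this
  have hedge : ∀ v y, G.Adj v y → a v ≤ ce s(v, y) ∧ ce s(v, y) ≤ a v + r := by
    intro v y hy
    have : ce s(v, y) ∈ palette G cv ce v := mem_palette_iff.2 (Or.inr ⟨y, hy, rfl⟩)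
    rw [ha', Set.mem_Icc] at this
    exact this
  have hlo : ∀ v, 1 ≤ a v := by
    intro v
    have : a v ∈ palette G cv ce v := by
      rw [ha', Set.mem_Icc]
      omega
    exact (hmem v _ this).1
  have hhi : ∀ v, a v + r ≤ t := by
    intro v
    have : a v + r ∈ palette G cv ce v := by
      rw [ha', Set.mem_Icc]
      omega
    exact (hmem v _ this).2
  have hrt : r + 1 ≤ t := by
    have h1 := hlo (Classical.arbitrary V)
    have h2 := hhi (Classical.arbitrary V)
    omega
  refine ⟨a, ha', hcv, hedge, hlo, hhi, ?_, hrt⟩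
  rcases husage 1 ⟨le_rfl, by omega⟩ with ⟨v, hv⟩ | ⟨e, he, hce⟩
  · have hm : (1 : ℕ) ∈ palette G cv ce v := mem_palette_iff.2 (Or.inl hv.symm)
    rw [ha', Set.mem_Icc] at hm
    have := hlo v
    exact ⟨v, by omega⟩
  · induction e with
    | _ p q =>
      have hm : (1 : ℕ) ∈ palette G cv ce p :=
        mem_palette_iff.2 (Or.inr ⟨q, G.mem_edgeSet.1 he, hce⟩)
      rw [ha', Set.mem_Icc] at hm
      have := hlo p
      exact ⟨p, by omega⟩

lemma constructB [Finite V] [Nonempty V] [DecidableEq V] {G : SimpleGraph V} {r t : ℕ}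
    {cv : V → ℕ} {ce : Sym2 V → ℕ}
    (hreg : ∀ v, deg G v = r) (h : IsIntervalTotalColoring G t cv ce) :
    HasIntervalTotalColoring (stepG G) (t + r + 2) := by
  obtain ⟨a, hpal, hcv, hedge, hlo, hhi, ⟨u0, hu0⟩, hrt⟩ := total_facts hreg h
  obtain ⟨h1, h2, h3⟩ := h.1
  have hprop := isProperEdgeColoring_iff.1 h2
  have h3' : ∀ v y, G.Adj v y → cv v ≠ ce s(v, y) := fun v y hy =>
    h3 v s(v, y) (G.mem_edgeSet.2 hy) (Sym2.mem_mk_left _ _)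
  have hb1 : ∀ v, 1 ≤ cv v ∧ cv v ≤ t := fun v => by
    have := h.2.1 v
    rwa [Set.mem_Icc] at this
  have husage := h.2.2.2.1
  refine ⟨fun p => cv p.1 + (if p.2 then r + 2 else 0), ecol a (r + 1) (r + 2) ce,
    isTotalColoring_of_pointwise ?_ ?_ ?_, ?_, edge_color_bound ?_, ?_, ?_⟩
  · rintro ⟨x, i⟩ p hadj
    rcases stepG_adj_cases hadj with ⟨y, hy, rfl⟩ | rfl
    · have := h1 x y hy
      cases i <;> simp <;> omega
    · have := hcv x
      cases i <;> simp <;> omega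
  · rintro ⟨w, i⟩ p q hp hq hne
    rcases stepG_adj_cases hp with ⟨y1, hy1, rfl⟩ | rfl <;>
      rcases stepG_adj_cases hq with ⟨y2, hy2, rfl⟩ | rfl
    · simp only [ecol_copy]
      have hy12 : y1 ≠ y2 := fun hy => hne (by rw [hy])
      have := hprop w y1 y2 hy1 hy2 hy12
      omega
    · simp only [ecol_copy, ecol_cross]
      have := hedge w y1 hy1
      cases i <;> simp <;> omega
    · simp only [ecol_copy, ecol_cross]
      have := hedge w y2 hy2
      cases i <;> simp <;> omega
    · exact absurd rfl hne
  · rintro ⟨x, i⟩ p hadj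
    rcases stepG_adj_cases hadj with ⟨y, hy, rfl⟩ | rfl
    · have := h3' x y hy
      cases i <;> simp <;> omega
    · have := hcv x
      rw [ecol_cross]
      cases i <;> simp <;> omega
  · rintro ⟨x, i⟩
    have := hb1 x
    rw [Set.mem_Icc]
    cases i <;> simp <;> omega
  · rintro ⟨x, i⟩ p hadj
    rcases stepG_adj_cases hadj with ⟨y, hy, rfl⟩ | rfl
    · rw [ecol_copy]
      have h4 := hedge x y hy
      have h5 := hlo x
      have h6 := hhi x
      rw [Set.mem_Icc]
      cases i <;> simp <;> omega
    · rw [ecol_cross, Set.mem_Icc]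
      have h5 := hlo x
      have h6 := hhi x
      omega
  · intro c hc
    rw [Set.mem_Icc] at hc
    by_cases hct : c ≤ t
    · rcases husage c ⟨hc.1, hct⟩ with ⟨v, hv⟩ | ⟨e, he, hce⟩
      · exact Or.inl ⟨(v, false), by simpa using hv⟩
      · induction e with
        | _ p q =>
          refine Or.inr (edge_usage_of_pointwise
            ⟨(p, false), (q, false), stepG_adj_copy _ (G.mem_edgeSet.1 he), ?_⟩)
          rw [ecol_copy]
          simpa using hce
    · by_cases hc2 : r + 3 ≤ c
      · rcases husage (c - (r + 2)) ⟨by omega, by omega⟩ with ⟨v, hv⟩ | ⟨e, he, hce⟩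
        · refine Or.inl ⟨(v, true), ?_⟩
          simp only [if_pos]
          omega
        · induction e with
          | _ p q =>
            refine Or.inr (edge_usage_of_pointwise
              ⟨(p, true), (q, true), stepG_adj_copy _ (G.mem_edgeSet.1 he), ?_⟩)
            rw [ecol_copy]
            simp only [if_pos]
            omega
      · refine Or.inr (edge_usage_of_pointwise ⟨(u0, false), (u0, true), ?_, ?_⟩)
        · have := stepG_adj_cross (G := G) u0 false
          simpa using this
        · have hh : (true : Bool) = !false := rfl
          rw [hh, ecol_cross]
          omega
  · rintro ⟨x, i⟩
    cases i
    case _ =>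
      refine ⟨a x, ?_⟩
      rw [deg_stepG, hreg]
      ext c
      rw [mem_palette_iff, Set.mem_Icc]
      constructor
      · rintro (hcvx | ⟨p, hadj, hce⟩)
        · have := hcv x
          simp at hcvx
          omega
        · rcases stepG_adj_cases hadj with ⟨y, hy, rfl⟩ | rfl
          · rw [ecol_copy] at hce
            have := hedge x y hy
            simp at hce
            omega
          · rw [ecol_cross] at hce
            omega
      · intro hcc
        by_cases hcr : c ≤ a x + r
        · have : c ∈ palette G cv ce x := by
            rw [hpal x, Set.mem_Icc]
            exact ⟨hcc.1, hcr⟩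
          rcases mem_palette_iff.1 this with rfl | ⟨y, hy, hce⟩
          · exact Or.inl (by simp)
          · refine Or.inr ⟨(y, false), stepG_adj_copy false hy, ?_⟩
            rw [ecol_copy]
            simp [hce]
        · refine Or.inr ⟨(x, !false), stepG_adj_cross x false, ?_⟩
          rw [ecol_cross]
          omega
    case _ =>
      refine ⟨a x + r + 1, ?_⟩
      rw [deg_stepG, hreg]
      ext c
      rw [mem_palette_iff, Set.mem_Icc]
      constructor
      · rintro (hcvx | ⟨p, hadj, hce⟩)
        · have := hcv x
          simp at hcvx
          omega
        · rcases stepG_adj_cases hadj with ⟨y, hy, rfl⟩ | rfl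
          · rw [ecol_copy] at hce
            have := hedge x y hy
            simp at hce
            omega
          · rw [ecol_cross] at hce
            omega
      · intro hcc
        by_cases hcr : a x + r + 2 ≤ c
        · have : c - (r + 2) ∈ palette G cv ce x := by
            rw [hpal x, Set.mem_Icc]
            constructor <;> omega
          rcases mem_palette_iff.1 this with hcvx | ⟨y, hy, hce⟩
          · refine Or.inl ?_
            simp only [if_pos]
            omega
          · refine Or.inr ⟨(y, true), stepG_adj_copy true hy, ?_⟩
            rw [ecol_copy]
            simp only [if_pos]
            omega
        · refine Or.inr ⟨(x, !true), stepG_adj_cross x true, ?_⟩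
          rw [ecol_cross]
          omega

def fcol [DecidableEq V] (k : ℕ) (σ : ℕ → ℕ) (ce : Sym2 V → ℕ) : Sym2 (V × Bool) → ℕ :=
  Sym2.lift ⟨fun p q =>
    if p.2 = q.2 then (if p.2 then σ (ce s(p.1, q.1)) else ce s(p.1, q.1)) else k, by
      intro p q
      dsimp only
      by_cases h1 : p.2 = q.2
      · rw [if_pos h1, if_pos h1.symm, Sym2.eq_swap, h1]
      · rw [if_neg h1, if_neg (Ne.symm h1)]⟩

@[simp] lemma fcol_copy [DecidableEq V] (k : ℕ) (σ : ℕ → ℕ) (ce : Sym2 V → ℕ)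
    (x y : V) (i : Bool) :
    fcol k σ ce s((x, i), (y, i)) = if i then σ (ce s(x, y)) else ce s(x, y) := by
  rw [fcol, Sym2.lift_mk]
  simp

@[simp] lemma fcol_cross [DecidableEq V] (k : ℕ) (σ : ℕ → ℕ) (ce : Sym2 V → ℕ)
    (x : V) (i : Bool) :
    fcol k σ ce s((x, i), (x, !i)) = k := by
  rw [fcol, Sym2.lift_mk]
  have h : i ≠ !i := by cases i <;> simp
  simp [h]

lemma constructFull [Finite V] [Nonempty V] [DecidableEq V] {G : SimpleGraph V} {r : ℕ}
    {cv : V → ℕ} {ce : Sym2 V → ℕ}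
    (hreg : ∀ v, deg G v = r) (hr : 1 ≤ r) (h : IsIntervalTotalColoring G (r + 1) cv ce) :
    ∃ cv' ce', IsIntervalTotalColoring (stepG G) (r + 2) cv' ce' := by
  obtain ⟨a, hpal, hcv, hedge, hlo, hhi, -, -⟩ := total_facts hreg h
  have ha1 : ∀ v, a v = 1 := by
    intro v
    have h1 := hlo v
    have h2 := hhi v
    omega
  have hpal1 : ∀ v, palette G cv ce v = Set.Icc 1 (r + 1) := by
    intro v
    have := hpal v
    rw [ha1 v, Nat.add_comm 1 r] at this
    exact this
  have hcv1 : ∀ v, 1 ≤ cv v ∧ cv v ≤ r + 1 := by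
    intro v
    have h1 := hcv v
    have := ha1 v
    omega
  have hedge1 : ∀ v y, G.Adj v y → 1 ≤ ce s(v, y) ∧ ce s(v, y) ≤ r + 1 := by
    intro v y hy
    have h1 := hedge v y hy
    have := ha1 v
    omega
  obtain ⟨h1, h2, h3⟩ := h.1
  have hprop := isProperEdgeColoring_iff.1 h2
  have h3' : ∀ v y, G.Adj v y → cv v ≠ ce s(v, y) := fun v y hy =>
    h3 v s(v, y) (G.mem_edgeSet.2 hy) (Sym2.mem_mk_left _ _)
  have husage := h.2.2.2.1
  set σ : ℕ → ℕ := fun c => c % (r + 1) + 1 with hσ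
  have hσpos : ∀ c, 1 ≤ σ c := fun c => by simp only [hσ]; omega
  have hσlt : ∀ c, σ c ≤ r + 1 := by
    intro c
    have := Nat.mod_lt c (show 0 < r + 1 by omega)
    simp only [hσ]
    omega
  have hσid : ∀ c, 1 ≤ c → c ≤ r → σ c = c + 1 := by
    intro c h1 h2
    simp only [hσ]
    rw [Nat.mod_eq_of_lt (by omega)]
  have hσtop : σ (r + 1) = 1 := by
    simp only [hσ]
    rw [Nat.mod_self]
  have hσne : ∀ c, 1 ≤ c → c ≤ r + 1 → σ c ≠ c := by
    intro c h1 h2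
    by_cases hc : c ≤ r
    · rw [hσid c h1 hc]; omega
    · have : c = r + 1 := by omega
      rw [this, hσtop]; omega
  have hσinj : ∀ c d, 1 ≤ c → c ≤ r + 1 → 1 ≤ d → d ≤ r + 1 → σ c = σ d → c = d := by
    intro c d hc1 hc2 hd1 hd2 heq
    by_cases hc : c ≤ r <;> by_cases hd : d ≤ r
    · rw [hσid c hc1 hc, hσid d hd1 hd] at heq; omega
    · have hd' : d = r + 1 := by omega
      rw [hσid c hc1 hc, hd', hσtop] at heq; omega
    · have hc' : c = r + 1 := by omega
      rw [hc', hσtop, hσid d hd1 hd] at heq; omega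
    · omega
  refine ⟨fun p => if p.2 then σ (cv p.1) else cv p.1, fcol (r + 2) σ ce,
    isTotalColoring_of_pointwise ?_ ?_ ?_, ?_, edge_color_bound ?_, ?_, ?_⟩
  · rintro ⟨x, i⟩ p hadj
    rcases stepG_adj_cases hadj with ⟨y, hy, rfl⟩ | rfl
    · have hxy := h1 x y hy
      have hx := hcv1 x
      have hy' := hcv1 y
      cases i <;> simp
      · exact hxy
      · exact fun heq => hxy (hσinj _ _ hx.1 hx.2 hy'.1 hy'.2 heq)
    · have hx := hcv1 x
      have := hσne (cv x) hx.1 hx.2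
      cases i <;> simp
      · exact fun heq => this heq.symm
      · exact this
  · rintro ⟨w, i⟩ p q hp hq hne
    rcases stepG_adj_cases hp with ⟨y1, hy1, rfl⟩ | rfl <;>
      rcases stepG_adj_cases hq with ⟨y2, hy2, rfl⟩ | rfl
    · simp only [fcol_copy]
      have hy12 : y1 ≠ y2 := fun hy => hne (by rw [hy])
      have hce12 := hprop w y1 y2 hy1 hy2 hy12
      have e1 := hedge1 w y1 hy1
      have e2 := hedge1 w y2 hy2
      cases i <;> simp
      · exact hce12
      · exact fun heq => hce12 (hσinj _ _ e1.1 e1.2 e2.1 e2.2 heq)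
    · simp only [fcol_copy, fcol_cross]
      have := hedge1 w y1 hy1
      have := hσlt (ce s(w, y1))
      cases i <;> simp <;> omega
    · simp only [fcol_copy, fcol_cross]
      have := hedge1 w y2 hy2
      have := hσlt (ce s(w, y2))
      cases i <;> simp <;> omega
    · exact absurd rfl hne
  · rintro ⟨x, i⟩ p hadj
    rcases stepG_adj_cases hadj with ⟨y, hy, rfl⟩ | rfl
    · have hxy := h3' x y hy
      have hx := hcv1 x
      have he := hedge1 x y hy
      cases i <;> simp
      · exact hxy
      · exact fun heq => hxy (hσinj _ _ hx.1 hx.2 he.1 he.2 heq)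
    · rw [fcol_cross]
      have hx := hcv1 x
      have := hσlt (cv x)
      cases i <;> simp <;> omega
  · rintro ⟨x, i⟩
    have hx := hcv1 x
    have h4 := hσlt (cv x)
    have h5 := hσpos (cv x)
    rw [Set.mem_Icc]
    cases i <;> simp <;> omega
  · rintro ⟨x, i⟩ p hadj
    rcases stepG_adj_cases hadj with ⟨y, hy, rfl⟩ | rfl
    · rw [fcol_copy]
      have he := hedge1 x y hy
      have h4 := hσlt (ce s(x, y))
      have h5 := hσpos (ce s(x, y))
      rw [Set.mem_Icc]
      cases i <;> simp <;> omega
    · rw [fcol_cross, Set.mem_Icc]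
      omega
  · intro c hc
    rw [Set.mem_Icc] at hc
    by_cases hct : c ≤ r + 1
    · rcases husage c ⟨hc.1, hct⟩ with ⟨v, hv⟩ | ⟨e, he, hce⟩
      · exact Or.inl ⟨(v, false), by simpa using hv⟩
      · induction e with
        | _ p q =>
          refine Or.inr (edge_usage_of_pointwise
            ⟨(p, false), (q, false), stepG_adj_copy _ (G.mem_edgeSet.1 he), ?_⟩)
          rw [fcol_copy]
          simpa using hce
    · refine Or.inr (edge_usage_of_pointwise
        ⟨(Classical.arbitrary V, false), (Classical.arbitrary V, true), ?_, ?_⟩)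
      · have := stepG_adj_cross (G := G) (Classical.arbitrary V) false
        simpa using this
      · have hh : (true : Bool) = !false := rfl
        rw [hh, fcol_cross]
        omega
  · rintro ⟨x, i⟩
    refine ⟨1, ?_⟩
    rw [deg_stepG, hreg]
    ext c
    rw [mem_palette_iff, Set.mem_Icc]
    cases i
    case _ =>
      constructor
      · rintro (hcvx | ⟨p, hadj, hce⟩)
        · have := hcv1 x
          simp at hcvx
          omega
        · rcases stepG_adj_cases hadj with ⟨y, hy, rfl⟩ | rfl
          · rw [fcol_copy] at hce
            have := hedge1 x y hy
            simp at hce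
            omega
          · rw [fcol_cross] at hce
            omega
      · intro hcc
        by_cases hcr : c ≤ r + 1
        · have : c ∈ palette G cv ce x := by
            rw [hpal1 x, Set.mem_Icc]
            exact ⟨hcc.1, hcr⟩
          rcases mem_palette_iff.1 this with rfl | ⟨y, hy, hce⟩
          · exact Or.inl (by simp)
          · refine Or.inr ⟨(y, false), stepG_adj_copy false hy, ?_⟩
            rw [fcol_copy]
            simp [hce]
        · refine Or.inr ⟨(x, !false), stepG_adj_cross x false, ?_⟩
          rw [fcol_cross]
          omega
    case _ =>
      constructor
      · rintro (hcvx | ⟨p, hadj, hce⟩)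
        · have := hσlt (cv x)
          simp only [if_pos] at hcvx
          constructor
          · rw [hcvx]; simp only [hσ]; omega
          · omega
        · rcases stepG_adj_cases hadj with ⟨y, hy, rfl⟩ | rfl
          · rw [fcol_copy] at hce
            simp only [if_pos] at hce
            have := hσlt (ce s(x, y))
            constructor
            · rw [← hce]; simp only [hσ]; omega
            · omega
          · rw [fcol_cross] at hce
            omega
      · intro hcc
        by_cases hcr : c ≤ r + 1
        · -- find preimage d of c under σ
          obtain ⟨d, hd1, hd2, hdc⟩ : ∃ d, 1 ≤ d ∧ d ≤ r + 1 ∧ σ d = c := by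
            by_cases hc1 : c = 1
            · exact ⟨r + 1, by omega, le_rfl, by rw [hσtop, hc1]⟩
            · exact ⟨c - 1, by omega, by omega, by rw [hσid (c-1) (by omega) (by omega)]; omega⟩
          have : d ∈ palette G cv ce x := by
            rw [hpal1 x, Set.mem_Icc]
            exact ⟨hd1, hd2⟩
          rcases mem_palette_iff.1 this with rfl | ⟨y, hy, hce⟩
          · refine Or.inl ?_
            simp only [if_pos]
            exact hdc.symm
          · refine Or.inr ⟨(y, true), stepG_adj_copy true hy, ?_⟩
            rw [fcol_copy]
            simp only [if_pos]
            rw [hce, hdc]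
        · refine Or.inr ⟨(x, !true), stepG_adj_cross x true, ?_⟩
          rw [fcol_cross]
          omega

lemma constructET [Nonempty V] {G : SimpleGraph V} {r t : ℕ} {ce : Sym2 V → ℕ}
    (hreg : ∀ v, deg G v = r) (hr : 1 ≤ r) (pr : V → Bool)
    (hpr : ∀ x y, G.Adj x y → pr x ≠ pr y) (h : IsIntervalEdgeColoring G t ce) :
    HasIntervalTotalColoring G (t + 2) := by
  obtain ⟨b, hedge, hpal', htop, -, -, ht1⟩ := edge_facts hreg hr h
  have hprop := isProperEdgeColoring_iff.1 h.1
  have husage := h.2.2.1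
  have hedge' : ∀ v y, G.Adj v y → b y + 1 ≤ ce s(v, y) ∧ ce s(v, y) ≤ b y + r := by
    intro v y hy
    have := hedge y v hy.symm
    rwa [Sym2.eq_swap] at this
  have hget : ∀ c, 1 ≤ c → c ≤ t → ∃ u y, G.Adj u y ∧ ce s(u, y) = c := by
    intro c h1 h2
    obtain ⟨e, he, hce⟩ := husage c ⟨h1, h2⟩
    induction e with
    | _ p q => exact ⟨p, q, G.mem_edgeSet.1 he, hce⟩
  refine ⟨fun x => if pr x then b x + 1 else b x + r + 2, fun e => ce e + 1,
    isTotalColoring_of_pointwise ?_ ?_ ?_, ?_, ?_, ?_, ?_⟩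
  · intro u v huv
    have hne := hpr u v huv
    have e1 := hedge u v huv
    have e2 := hedge' u v huv
    cases hu : pr u <;> cases hv : pr v
    · exact absurd (hu.trans hv.symm) hne
    · simp only [hu, hv]
      simp
      omega
    · simp only [hu, hv]
      simp
      omega
    · exact absurd (hu.trans hv.symm) hne
  · intro w p q hp hq hpq
    have := hprop w p q hp hq hpq
    omega
  · intro v y hy
    have e1 := hedge v y hy
    cases hv : pr v <;> simp [hv] <;> omega
  · intro v
    have h5 := htop v
    rw [Set.mem_Icc]
    cases hv : pr v <;> simp [hv] <;> omega
  · intro e he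
    have h1 := h.2.1 e he
    rw [Set.mem_Icc] at h1
    show ce e + 1 ∈ Set.Icc 1 (t + 2)
    rw [Set.mem_Icc]
    omega
  · intro c hc
    rw [Set.mem_Icc] at hc
    by_cases hc1 : c = 1
    · obtain ⟨u, y, hy, hce⟩ := hget 1 le_rfl ht1
      have e1 := hedge u y hy
      have e2 := hedge' u y hy
      have hne := hpr u y hy
      subst hc1
      by_cases hu : pr u = true
      · exact Or.inl ⟨u, by simp [hu]; omega⟩
      · refine Or.inl ⟨y, ?_⟩
        have hy' : pr y = true := by
          cases hyy : pr y
          · simp_all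
          · rfl
        simp [hy']
        omega
    · by_cases hc2 : c = t + 2
      · obtain ⟨u, y, hy, hce⟩ := hget t ht1 le_rfl
        have e1 := hedge u y hy
        have e2 := hedge' u y hy
        have h5 := htop u
        have h6 := htop y
        have hne := hpr u y hy
        subst hc2
        by_cases hu : pr u = true
        · refine Or.inl ⟨y, ?_⟩
          have hy' : pr y = false := by
            cases hyy : pr y
            · rfl
            · simp_all
          simp [hy']
          omega
        · refine Or.inl ⟨u, ?_⟩
          have hu' : pr u = false := by simpa using hu
          simp [hu']
          omega
      · obtain ⟨u, y, hy, hce⟩ := hget (c - 1) (by omega) (by omega)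
        refine Or.inr (edge_usage_of_pointwise ⟨u, y, hy, ?_⟩)
        omega
  · intro x
    cases hx : pr x
    case _ =>
      refine ⟨b x + 2, ?_⟩
      rw [hreg]
      ext c
      rw [mem_palette_iff, Set.mem_Icc]
      constructor
      · rintro (hcvx | ⟨y, hy, hce⟩)
        · simp [hx] at hcvx
          omega
        · have := hedge x y hy
          omega
      · intro hcc
        by_cases hcr : c ≤ b x + r + 1
        · have : c - 1 ∈ edgePalette G ce x := by
            rw [hpal' x, Set.mem_Icc]
            omega
          obtain ⟨y, hy, hce⟩ := mem_edgePalette_iff.1 this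
          refine Or.inr ⟨y, hy, ?_⟩
          omega
        · refine Or.inl ?_
          simp [hx]
          omega
    case _ =>
      refine ⟨b x + 1, ?_⟩
      rw [hreg]
      ext c
      rw [mem_palette_iff, Set.mem_Icc]
      constructor
      · rintro (hcvx | ⟨y, hy, hce⟩)
        · simp [hx] at hcvx
          omega
        · have := hedge x y hy
          omega
      · intro hcc
        by_cases hcr : b x + 2 ≤ c
        · have : c - 1 ∈ edgePalette G ce x := by
            rw [hpal' x, Set.mem_Icc]
            omega
          obtain ⟨y, hy, hce⟩ := mem_edgePalette_iff.1 this
          refine Or.inr ⟨y, hy, ?_⟩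
          omega
        · refine Or.inl ?_
          simp [hx]
          omega

/-! ### Base cases -/

lemma fin1_adj_cases {x p : Fin 1 → Bool} (h : (hypercube 1).Adj x p) : p = flp x 0 := by
  obtain ⟨i, rfl⟩ := hypercube_adj_iff.1 h
  rw [Fin.eq_zero i]

lemma q1_edge : ∃ ce, IsIntervalEdgeColoring (hypercube 1) 1 ce := by
  refine ⟨fun _ => 1, ?_, ?_, ?_, ?_⟩
  · refine isProperEdgeColoring_iff.2 ?_
    intro w p q hp hq hpq
    exact absurd ((fin1_adj_cases hp).trans (fin1_adj_cases hq).symm) hpq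
  · intro e he
    simp
  · intro c hc
    rw [Set.mem_Icc] at hc
    have hc1 : c = 1 := by omega
    exact edge_usage_of_pointwise ⟨fun _ => false, flp (fun _ => false) 0,
      hypercube_adj_flp _ 0, hc1.symm⟩
  · intro v
    refine ⟨0, ?_⟩
    rw [deg_hypercube]
    ext c
    rw [mem_edgePalette_iff, Set.mem_Icc]
    constructor
    · rintro ⟨y, hy, hc⟩
      omega
    · intro hc
      exact ⟨flp v 0, hypercube_adj_flp v 0, by omega⟩

lemma q1_total : ∃ cv ce, IsIntervalTotalColoring (hypercube 1) 3 cv ce := by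
  refine ⟨fun x => if x 0 then 3 else 1, fun _ => 2,
    isTotalColoring_of_pointwise ?_ ?_ ?_, ?_, ?_, ?_, ?_⟩
  · intro u v huv
    have := fin1_adj_cases huv
    subst this
    rw [flp_apply_self]
    cases u 0 <;> simp
  · intro w p q hp hq hpq
    exact absurd ((fin1_adj_cases hp).trans (fin1_adj_cases hq).symm) hpq
  · intro v y hy
    cases v 0 <;> simp
  · intro v
    rw [Set.mem_Icc]
    cases hv : v 0 <;> simp [hv]
  · intro e he
    simp [Set.mem_Icc]
  · intro c hc
    rw [Set.mem_Icc] at hc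
    rcases Nat.lt_or_ge c 2 with h2 | h2
    · refine Or.inl ⟨fun _ => false, ?_⟩
      simp
      omega
    · rcases Nat.lt_or_ge c 3 with h3 | h3
      · refine Or.inr (edge_usage_of_pointwise ⟨fun _ => false, flp (fun _ => false) 0,
          hypercube_adj_flp _ 0, by omega⟩)
      · refine Or.inl ⟨fun _ => true, ?_⟩
        simp
        omega
  · intro v
    cases hv : v 0
    case _ =>
      refine ⟨1, ?_⟩
      rw [deg_hypercube]
      ext c
      rw [mem_palette_iff, Set.mem_Icc]
      constructor
      · rintro (hc | ⟨y, hy, hc⟩)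
        · simp [hv] at hc
          omega
        · omega
      · intro hc
        rcases Nat.lt_or_ge c 2 with h2 | h2
        · refine Or.inl ?_
          simp [hv]
          omega
        · exact Or.inr ⟨flp v 0, hypercube_adj_flp v 0, by omega⟩
    case _ =>
      refine ⟨2, ?_⟩
      rw [deg_hypercube]
      ext c
      rw [mem_palette_iff, Set.mem_Icc]
      constructor
      · rintro (hc | ⟨y, hy, hc⟩)
        · simp [hv] at hc
          omega
        · omega
      · intro hc
        rcases Nat.lt_or_ge c 3 with h2 | h2
        · exact Or.inr ⟨flp v 0, hypercube_adj_flp v 0, by omega⟩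
        · refine Or.inl ?_
          simp [hv]
          omega

/-! ### Parity -/

def par (x : Fin n → Bool) : Bool := (Finset.univ.filter (fun i => x i)).card % 2 == 1

lemma par_flp (x : Fin n → Bool) (i : Fin n) : par (flp x i) ≠ par x := by
  unfold par
  rcases hxi : x i with hv | hv
  · have hfilter : Finset.univ.filter (fun j => flp x i j) =
        insert i (Finset.univ.filter (fun j => x j)) := by
      ext j
      simp only [Finset.mem_filter, Finset.mem_insert, Finset.mem_univ, true_and]
      by_cases hj : j = i
      · subst hj
        rw [flp_apply_self, hxi]
        simp
      · rw [flp_apply_ne _ hj]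
        simp [hj]
    have hnotmem : i ∉ Finset.univ.filter (fun j => x j) := by
      simp [hxi]
    rw [hfilter, Finset.card_insert_of_notMem hnotmem]
    set m := (Finset.univ.filter (fun j => x j)).card
    have : (m + 1) % 2 ≠ m % 2 := by omega
    rcases Nat.mod_two_eq_zero_or_one m with h | h <;>
      rcases Nat.mod_two_eq_zero_or_one (m + 1) with h' | h' <;> simp_all
  · have hfilter : Finset.univ.filter (fun j => flp x i j) =
        (Finset.univ.filter (fun j => x j)).erase i := by
      ext j
      simp only [Finset.mem_filter, Finset.mem_erase, Finset.mem_univ, true_and]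
      by_cases hj : j = i
      · subst hj
        rw [flp_apply_self, hxi]
        simp
      · rw [flp_apply_ne _ hj]
        simp [hj]
    have hmem : i ∈ Finset.univ.filter (fun j => x j) := by
      simp [hxi]
    rw [hfilter, Finset.card_erase_of_mem hmem]
    set m := (Finset.univ.filter (fun j => x j)).card with hm
    have hm1 : 1 ≤ m := by
      rw [hm]
      exact Finset.card_pos.2 ⟨i, hmem⟩
    have : (m - 1) % 2 ≠ m % 2 := by omega
    rcases Nat.mod_two_eq_zero_or_one (m - 1) with h | h <;>
      rcases Nat.mod_two_eq_zero_or_one m with h' | h' <;> simp_all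

lemma par_adj {n : ℕ} {x y : Fin n → Bool} (h : (hypercube n).Adj x y) : par x ≠ par y := by
  obtain ⟨i, rfl⟩ := hypercube_adj_iff.1 h
  exact (par_flp x i).symm

/-! ### Explicit full coloring of Q_3 -/

def q3idx (x : Fin 3 → Bool) : ℕ :=
  (cond (x 0) 1 0) + 2 * (cond (x 1) 1 0) + 4 * (cond (x 2) 1 0)

def q3cvT : List ℕ := [1, 2, 3, 4, 4, 3, 2, 1]

def q3M : List (List ℕ) :=
  [[0,3,4,0,2,0,0,0],[3,0,0,1,0,4,0,0],[4,0,0,2,0,0,1,0],[0,1,2,0,0,0,0,3],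
   [2,0,0,0,0,1,3,0],[0,4,0,0,1,0,0,2],[0,0,1,0,3,0,0,4],[0,0,0,3,0,2,4,0]]

def q3cv (x : Fin 3 → Bool) : ℕ := q3cvT.getD (q3idx x) 0

def q3f (x y : Fin 3 → Bool) : ℕ := (q3M.getD (q3idx x) []).getD (q3idx y) 0

instance hypercubeAdjDecidable (n : ℕ) : DecidableRel (hypercube n).Adj := fun u v =>
  decidable_of_iff (∃ i, (u i ≠ v i) ∧ ∀ j, (u j ≠ v j) → j = i) Iff.rfl

def q3ce : Sym2 (Fin 3 → Bool) → ℕ := Sym2.lift ⟨q3f, by decide⟩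

lemma q3ce_mk (x y : Fin 3 → Bool) : q3ce s(x, y) = q3f x y := rfl

lemma q3full : IsIntervalTotalColoring (hypercube 3) 4 q3cv q3ce := by
  have hvv : ∀ u v : Fin 3 → Bool, (hypercube 3).Adj u v → q3cv u ≠ q3cv v := by decide
  have hee : ∀ w p q : Fin 3 → Bool, (hypercube 3).Adj w p → (hypercube 3).Adj w q → p ≠ q →
      q3f w p ≠ q3f w q := by decide
  have hve : ∀ v y : Fin 3 → Bool, (hypercube 3).Adj v y → q3cv v ≠ q3f v y := by decide
  have hcvb : ∀ v : Fin 3 → Bool, 1 ≤ q3cv v ∧ q3cv v ≤ 4 := by decide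
  have hceb : ∀ v y : Fin 3 → Bool, (hypercube 3).Adj v y → 1 ≤ q3f v y ∧ q3f v y ≤ 4 := by
    decide
  have huse : ∀ c ∈ Finset.Icc 1 4, ∃ v : Fin 3 → Bool, q3cv v = c := by decide
  have hpal : ∀ v : Fin 3 → Bool, ∀ c ∈ Finset.Icc 1 4,
      q3cv v = c ∨ ∃ y, (hypercube 3).Adj v y ∧ q3f v y = c := by decide
  refine ⟨isTotalColoring_of_pointwise hvv ?_ ?_, ?_, edge_color_bound ?_, ?_, ?_⟩
  · intro w p q hp hq hpq
    rw [q3ce_mk, q3ce_mk]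
    exact hee w p q hp hq hpq
  · intro v y hy
    rw [q3ce_mk]
    exact hve v y hy
  · intro v
    rw [Set.mem_Icc]
    exact hcvb v
  · intro v y hy
    rw [q3ce_mk, Set.mem_Icc]
    exact hceb v y hy
  · intro c hc
    rw [Set.mem_Icc] at hc
    obtain ⟨v, hv⟩ := huse c (Finset.mem_Icc.2 hc)
    exact Or.inl ⟨v, hv⟩
  · intro v
    refine ⟨1, ?_⟩
    rw [deg_hypercube]
    ext c
    rw [mem_palette_iff, Set.mem_Icc]
    constructor
    · rintro (rfl | ⟨y, hy, hc⟩)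
      · exact hcvb v
      · rw [q3ce_mk] at hc
        have := hceb v y hy
        omega
    · intro hc
      rcases hpal v c (Finset.mem_Icc.2 (by omega)) with hcv | ⟨y, hy, hc'⟩
      · exact Or.inl hcv.symm
      · exact Or.inr ⟨y, hy, by rw [q3ce_mk]; exact hc'⟩

/-! ### Chains -/

lemma quadk (k : ℕ) : 4 * k ≤ k * (k + 1) + 2 := by
  induction k with
  | zero => simp
  | succ p ih =>
    have hb : (p+1)*(p+1+1) = p*(p+1) + 2*(p+1) := by ring
    omega

lemma edgeAll : ∀ k, 1 ≤ k → ∀ t, k ≤ t → 2 * t ≤ k * (k + 1) →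
    ∃ ce, IsIntervalEdgeColoring (hypercube k) t ce := by
  intro k hk
  induction k, hk using Nat.le_induction with
  | base =>
    intro t ht1 ht2
    have ht : t = 1 := by omega
    subst ht
    exact q1_edge
  | succ k hk IH =>
    intro t ht1 ht2
    obtain ⟨m, hm⟩ := Nat.even_mul_succ_self k
    have hexp : (k+1)*(k+1+1) = k*(k+1) + 2*(k+1) := by ring
    have hK4 : 4*k ≤ k*(k+1) + 2 := quadk k
    rw [hexp] at ht2
    set K := k * (k+1) with hK
    by_cases hcase : 2 * (t - 1) ≤ K
    · obtain ⟨ce, hce⟩ := IH (t - 1) (by omega) hcase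
      obtain ⟨ce', hce'⟩ := constructE1 (fun v => deg_hypercube v) hk hce
      have heq : t - 1 + 1 = t := by omega
      rw [heq] at hce'
      exact transfer_edge (stepIso k) hce'
    · obtain ⟨ce, hce⟩ := IH (t - (k+1)) (by omega) (by omega)
      obtain ⟨ce', hce'⟩ := constructE2 (fun v => deg_hypercube v) hk hce
      have heq : t - (k+1) + k + 1 = t := by omega
      rw [heq] at hce'
      exact transfer_edge (stepIso k) hce'

lemma fullAll : ∀ k, 3 ≤ k → ∃ cv ce, IsIntervalTotalColoring (hypercube k) (k + 1) cv ce := by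
  intro k hk
  induction k, hk using Nat.le_induction with
  | base => exact ⟨q3cv, q3ce, q3full⟩
  | succ k hk IH =>
    obtain ⟨cv, ce, h⟩ := IH
    obtain ⟨cv', ce', h'⟩ := constructFull (fun v => deg_hypercube v) (by omega) h
    exact transfer_total (stepIso k) ⟨cv', ce', h'⟩

lemma totalAll : ∀ k, 3 ≤ k → ∀ t, k + 1 ≤ t → 2 * t ≤ (k+1)*(k+2) →
    HasIntervalTotalColoring (hypercube k) t := by
  intro k hk
  induction k, hk using Nat.le_induction with
  | base =>
    intro t ht1 ht2
    rcases eq_or_lt_of_le ht1 with h4 | h5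
    · obtain ⟨cv, ce, h⟩ := fullAll 3 le_rfl
      exact ⟨cv, ce, h4 ▸ h⟩
    · by_cases h8 : t ≤ 8
      · obtain ⟨ce, hce⟩ := edgeAll 3 (by omega) (t - 2) (by omega) (by omega)
        have h' := constructET (fun v => deg_hypercube v) (by omega) par
          (fun x y h => par_adj h) hce
        have heq : t - 2 + 2 = t := by omega
        rwa [heq] at h'
      · have q2five : HasIntervalTotalColoring (hypercube 2) 5 := by
          obtain ⟨ce, hce⟩ := edgeAll 2 (by omega) 3 (by omega) (by omega)
          exact constructET (fun v => deg_hypercube v) (by omega) par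
            (fun x y h => par_adj h) hce
        have q2six : HasIntervalTotalColoring (hypercube 2) 6 := by
          obtain ⟨cv, ce, h⟩ := q1_total
          exact transfer_total (stepIso 1) (constructB (fun v => deg_hypercube v) h)
        by_cases h9 : t = 9
        · obtain ⟨cv, ce, h⟩ := q2five
          have h' := transfer_total (stepIso 2) (constructB (fun v => deg_hypercube v) h)
          rw [h9]
          exact h'
        · have h10 : t = 10 := by omega
          obtain ⟨cv, ce, h⟩ := q2six
          have h' := transfer_total (stepIso 2) (constructB (fun v => deg_hypercube v) h)
          rw [h10]
          exact h'
  | succ k hk IH =>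
    intro t ht1 ht2
    have hexp : (k+1+1)*(k+1+2) = (k+1)*(k+2) + 2*(k+2) := by ring
    obtain ⟨m, hm⟩ := Nat.even_mul_succ_self (k+1)
    have hm' : (k+1)*(k+2) = m + m := by
      have : (k+1)*(k+1+1) = (k+1)*(k+2) := by ring
      omega
    have hK4 : 4*(k+1) ≤ (k+1)*(k+2) + 2 := by
      have h1 := quadk (k+1)
      have h2 : (k+1)*(k+1+1) = (k+1)*(k+2) := by ring
      omega
    rw [hexp] at ht2
    set K := (k+1)*(k+2) with hKdef
    rcases eq_or_lt_of_le ht1 with h4 | h5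
    · obtain ⟨cv, ce, h⟩ := fullAll (k+1) (by omega)
      exact ⟨cv, ce, h4 ▸ h⟩
    · by_cases hcase : 2*(t-2) ≤ K
      · obtain ⟨ce, hce⟩ := edgeAll (k+1) (by omega) (t - 2) (by omega) (by
          have : (k+1)*(k+1+1) = K := by rw [hKdef]; try ring
          omega)
        have h' := constructET (fun v => deg_hypercube v) (by omega) par
          (fun x y h => par_adj h) hce
        have heq : t - 2 + 2 = t := by omega
        rwa [heq] at h'
      · obtain ⟨cv, ce, h⟩ := IH (t - (k+2)) (by omega) (by omega)
        have h' := transfer_total (stepIso k) (constructB (fun v => deg_hypercube v) h)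
        have heq : t - (k+2) + k + 2 = t := by omega
        rwa [heq] at h'

/-! ### Necessity -/

def ham (u x : Fin n → Bool) : ℕ := (Finset.univ.filter (fun i => x i ≠ u i)).card

lemma ham_le (u x : Fin n → Bool) : ham u x ≤ n :=
  (Finset.card_filter_le _ _).trans (le_of_eq (by simp))

lemma ham_eq_zero {u x : Fin n → Bool} (h : ham u x = 0) : x = u := by
  funext i
  by_contra hi
  have hmem : i ∈ Finset.univ.filter (fun i => x i ≠ u i) := by simp [hi]
  rw [ham, Finset.card_eq_zero] at h
  rw [h] at hmem
  exact absurd hmem (Finset.notMem_empty i)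

lemma ham_flp {u x : Fin n → Bool} {i : Fin n} (h : x i ≠ u i) :
    ham u (flp x i) + 1 = ham u x := by
  have hset : Finset.univ.filter (fun j => flp x i j ≠ u j) =
      (Finset.univ.filter (fun j => x j ≠ u j)).erase i := by
    ext j
    simp only [Finset.mem_filter, Finset.mem_erase, Finset.mem_univ, true_and]
    by_cases hj : j = i
    · subst hj
      rw [flp_apply_self]
      constructor
      · intro hc
        exfalso
        cases hx : x j <;> cases hu : u j <;> simp_all
      · rintro ⟨hc, -⟩
        exact absurd rfl hc
    · rw [flp_apply_ne _ hj]
      simp [hj]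
  have hmem : i ∈ Finset.univ.filter (fun j => x j ≠ u j) := by simp [h]
  have hpos : 1 ≤ (Finset.univ.filter (fun j => x j ≠ u j)).card :=
    Finset.card_pos.2 ⟨i, hmem⟩
  rw [ham, ham, hset, Finset.card_erase_of_mem hmem]
  omega

lemma necessity {n t : ℕ} (hn : 1 ≤ n) (h : HasIntervalTotalColoring (hypercube n) t) :
    n + 1 ≤ t ∧ 2 * t ≤ (n + 1) * (n + 2) := by
  obtain ⟨cv, ce, h⟩ := h
  obtain ⟨a, hpal, hcv, hedge, hlo, hhi, ⟨u, hu⟩, hrt⟩ :=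
    total_facts (fun v => deg_hypercube v) h
  refine ⟨by omega, ?_⟩
  have hprop := isProperEdgeColoring_iff.1 h.1.2.1
  set S : ℕ → ℕ := fun d => ∑ j ∈ Finset.range d, (n - j) with hS
  have key : ∀ d, ∀ x : Fin n → Bool, ham u x = d → a x ≤ 1 + S d := by
    intro d
    induction d with
    | zero =>
      intro x hx
      rw [ham_eq_zero hx, hu]
      omega
    | succ d IH =>
      intro x hx
      have hDcard : (Finset.univ.filter (fun i => x i ≠ u i)).card = d + 1 := hx
      have hDn : d + 1 ≤ n := by
        rw [← hDcard]
        exact (Finset.card_filter_le _ _).trans (le_of_eq (by simp))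
      have hinj : Set.InjOn (fun i => ce s(x, flp x i))
          ↑(Finset.univ.filter (fun i => x i ≠ u i)) := by
        intro i _ j _ hij
        by_contra hne
        have hf : flp x i ≠ flp x j := fun he => hne (flp_injective x he)
        exact hprop x (flp x i) (flp x j) (hypercube_adj_flp x i) (hypercube_adj_flp x j)
          hf hij
      have hbound : ∀ i ∈ Finset.univ.filter (fun i => x i ≠ u i),
          a x ≤ ce s(x, flp x i) ∧ ce s(x, flp x i) ≤ 1 + S d + n := by
        intro i hi
        have hxi : x i ≠ u i := by
          simpa using hi
        have h1 := hedge x (flp x i) (hypercube_adj_flp x i)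
        have hflp : ham u (flp x i) = d := by
          have := ham_flp hxi
          omega
        have h2 := IH (flp x i) hflp
        have h3 : ce s(x, flp x i) ≤ a (flp x i) + n := by
          have h4 := hedge (flp x i) x ((hypercube_adj_flp x i).symm)
          rw [Sym2.eq_swap] at h4
          exact h4.2
        exact ⟨h1.1, by omega⟩
      have himg : (Finset.univ.filter (fun i => x i ≠ u i)).image
          (fun i => ce s(x, flp x i)) ⊆ Finset.Icc (a x) (1 + S d + n) := by
        intro c hc
        rw [Finset.mem_image] at hc
        obtain ⟨i, hi, rfl⟩ := hc
        rw [Finset.mem_Icc]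
        exact hbound i hi
      have hcard : d + 1 ≤ (Finset.Icc (a x) (1 + S d + n)).card := by
        rw [← hDcard, ← Finset.card_image_of_injOn hinj]
        exact Finset.card_le_card himg
      rw [Nat.card_Icc] at hcard
      have hSsucc : S (d + 1) = S d + (n - d) := Finset.sum_range_succ _ d
      have hne : (Finset.univ.filter (fun i => x i ≠ u i)).Nonempty :=
        Finset.card_pos.1 (by omega)
      obtain ⟨i0, hi0⟩ := hne
      have h0 := hbound i0 hi0
      omega
  have ht1 : 1 ≤ t := by omega
  obtain ⟨w, hw⟩ : ∃ w, t ≤ a w + n := by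
    rcases h.2.2.2.1 t ⟨ht1, le_rfl⟩ with ⟨v, hv⟩ | ⟨e, he, hce⟩
    · have hm : t ∈ palette (hypercube n) cv ce v := mem_palette_iff.2 (Or.inl hv.symm)
      rw [hpal v, Set.mem_Icc] at hm
      exact ⟨v, hm.2⟩
    · induction e with
      | _ p q =>
        have hm : t ∈ palette (hypercube n) cv ce p :=
          mem_palette_iff.2 (Or.inr ⟨q, (hypercube n).mem_edgeSet.1 he, hce⟩)
        rw [hpal p, Set.mem_Icc] at hm
        exact ⟨p, hm.2⟩
  have hkey := key (ham u w) w rfl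
  have hmono : S (ham u w) ≤ S n :=
    Finset.sum_le_sum_of_subset (Finset.range_subset_range.2 (ham_le u w))
  have hgauss : 2 * S n = n * (n + 1) := by
    have hrefl := Finset.sum_range_reflect (fun j => n - j) n
    have hcong : ∑ j ∈ Finset.range n, (n - (n - 1 - j)) =
        ∑ j ∈ Finset.range n, (j + 1) :=
      Finset.sum_congr rfl (fun j hj => by rw [Finset.mem_range] at hj; omega)
    have h1 : S n = ∑ j ∈ Finset.range n, (j + 1) := by
      calc S n = ∑ j ∈ Finset.range n, (n - (n - 1 - j)) := hrefl.symm
        _ = ∑ j ∈ Finset.range n, (j + 1) := hcong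
    have h2 : (∑ j ∈ Finset.range n, j) * 2 = n * (n - 1) := Finset.sum_range_id_mul_two n
    have h3 : ∑ j ∈ Finset.range n, (j + 1) = (∑ j ∈ Finset.range n, j) + n := by
      rw [Finset.sum_add_distrib]
      simp
    have h4 : n * (n + 1) = n * (n - 1) + 2 * n := by
      cases n with
      | zero => rfl
      | succ p =>
        simp only [Nat.succ_sub_one]
        ring
    omega
  have hfinal : (n + 1) * (n + 2) = n * (n + 1) + 2 * n + 2 := by ring
  have hhw := hhi w
  omega

theorem stmt10 (n t : ℕ) (hn : 3 ≤ n) :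
    HasIntervalTotalColoring (hypercube n) t ↔
      n + 1 ≤ t ∧ t ≤ (n + 1) * (n + 2) / 2 := by
  constructor
  · intro h
    obtain ⟨h1, h2⟩ := necessity (by omega) h
    refine ⟨h1, ?_⟩
    rw [Nat.le_div_iff_mul_le (by norm_num)]
    omega
  · rintro ⟨h1, h2⟩
    apply totalAll n hn t h1
    rw [Nat.le_div_iff_mul_le (by norm_num)] at h2
    omega

end ITC
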